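/- Let $R = k[X_0,\dots,X_m]/J$ be an $\mathbb{N}$-graded domain where $k$ is a domain, the variables $X_i$ have positive weights $A_i$, and $J$ is homogeneous. Let $A = \mathrm{lcm}(A_0,\dots,A_m)$ and let $I = R_{\geq mA}$ be the ideal generated by all homogeneous elements of degree at least $mA$. Then for every integer $p \geq 1$, $I^p = R_{\geq pmA}$. -/

import Mathlib

set_option synthInstance.maxHeartbeats 400000
set_option maxHeartbeats 800000

open MvPolynomial

/-- From a monomial exponent `s` of weight at least `(m+j)*L`, one can extract a
sub-exponent of weight exactly `j*L`, provided each `A i` is positive and divides `L`. -/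
lemma aux_extract (m : ℕ) (A : Fin (m + 1) → ℕ) (hApos : ∀ i, 0 < A i) (L : ℕ)
    (hdvd : ∀ i, A i ∣ L) :
    ∀ (j : ℕ) (s : Fin (m + 1) →₀ ℕ), (m + j) * L ≤ Finsupp.weight A s →
      ∃ t : Fin (m + 1) →₀ ℕ, t ≤ s ∧ Finsupp.weight A t = j * L := by
  intro j
  induction j with
  | zero => intro s _; exact ⟨0, zero_le, by simp⟩
  | succ j ih =>
    intro s hs
    have hw : ∀ u : Fin (m+1) →₀ ℕ, Finsupp.weight A u = ∑ i, u i * A i := by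
      intro u
      rw [Finsupp.weight_apply, Finsupp.sum_fintype]
      · simp [smul_eq_mul]
      · simp
    -- find a variable i with s i ≥ L / A i
    have hex : ∃ i, L / A i ≤ s i := by
      by_contra hcon
      push_neg at hcon
      have hle : ∀ i : Fin (m+1), s i * A i + A i ≤ L := by
        intro i
        have h1 : s i + 1 ≤ L / A i := hcon i
        calc s i * A i + A i = (s i + 1) * A i := by ring
          _ ≤ (L / A i) * A i := Nat.mul_le_mul_right _ h1
          _ = L := Nat.div_mul_cancel (hdvd i)
      have hsum : Finsupp.weight A s + ∑ i : Fin (m+1), A i ≤ (m + 1) * L := by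
        rw [hw, ← Finset.sum_add_distrib]
        calc (∑ i : Fin (m+1), (s i * A i + A i)) ≤ ∑ _i : Fin (m+1), L :=
          Finset.sum_le_sum fun i _ => hle i
          _ = (m + 1) * L := by simp [Finset.sum_const, mul_comm]
      have hpos : 0 < ∑ i : Fin (m+1), A i :=
        Finset.sum_pos (fun i _ => hApos i) ⟨0, Finset.mem_univ 0⟩
      have h2 : (m + 1) * L ≤ Finsupp.weight A s := by
        calc (m + 1) * L ≤ (m + (j + 1)) * L := Nat.mul_le_mul_right _ (by omega)
          _ ≤ _ := hs
      omega
    obtain ⟨i, hi⟩ := hex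
    set c := L / A i with hc
    have hcA : c * A i = L := Nat.div_mul_cancel (hdvd i)
    have hsingle_le : Finsupp.single i c ≤ s := Finsupp.single_le_iff.2 hi
    have hsplit : s - Finsupp.single i c + Finsupp.single i c = s :=
      tsub_add_cancel_of_le hsingle_le
    have hwsingle : Finsupp.weight A (Finsupp.single i c) = L := by
      simp [Finsupp.weight_apply, Finsupp.sum_single_index, smul_eq_mul, hcA]
    have hws : Finsupp.weight A (s - Finsupp.single i c) + L = Finsupp.weight A s := by
      conv_rhs => rw [← hsplit]
      rw [map_add, hwsingle]
    have hrec : (m + j) * L ≤ Finsupp.weight A (s - Finsupp.single i c) := by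
      have : (m + (j+1)) * L = (m + j) * L + L := by ring
      omega
    obtain ⟨t', ht'le, ht'w⟩ := ih _ hrec
    refine ⟨t' + Finsupp.single i c, ?_, ?_⟩
    · calc t' + Finsupp.single i c ≤ (s - Finsupp.single i c) + Finsupp.single i c :=
        add_le_add ht'le le_rfl
        _ = s := hsplit
    · rw [map_add, ht'w, hwsingle]; ring

lemma aux_mul_le {m : ℕ} {k : Type*} [CommRing k] (A : Fin (m + 1) → ℕ) (a b : ℕ) :
    Ideal.span {f : MvPolynomial (Fin (m+1)) k | ∃ d : ℕ, a ≤ d ∧ IsWeightedHomogeneous A f d} *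
      Ideal.span {f | ∃ d : ℕ, b ≤ d ∧ IsWeightedHomogeneous A f d} ≤
    Ideal.span {f | ∃ d : ℕ, a + b ≤ d ∧ IsWeightedHomogeneous A f d} := by
  rw [Ideal.span_mul_span']
  apply Ideal.span_mono
  rintro x ⟨f, ⟨d, hd, hf⟩, g, ⟨e, he, hg⟩, rfl⟩
  exact ⟨d + e, add_le_add hd he, hf.mul hg⟩

lemma aux_main {m : ℕ} {k : Type*} [CommRing k] (A : Fin (m + 1) → ℕ)
    (hApos : ∀ i, 0 < A i) (L : ℕ) (hdvd : ∀ i, A i ∣ L) (p : ℕ) (hp : 1 ≤ p) :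
    (Ideal.span {f : MvPolynomial (Fin (m+1)) k |
        ∃ d : ℕ, m * L ≤ d ∧ IsWeightedHomogeneous A f d}) ^ p =
      Ideal.span {f | ∃ d : ℕ, p * m * L ≤ d ∧ IsWeightedHomogeneous A f d} := by
  induction p, hp using Nat.le_induction with
  | base => simp [pow_one, one_mul]
  | succ p hp ih =>
    apply le_antisymm
    · rw [pow_succ]
      calc _ ≤ Ideal.span {f : MvPolynomial (Fin (m+1)) k |
            ∃ d : ℕ, p * m * L ≤ d ∧ IsWeightedHomogeneous A f d} *
            Ideal.span {f | ∃ d : ℕ, m * L ≤ d ∧ IsWeightedHomogeneous A f d} :=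
          Ideal.mul_mono_left (le_of_eq ih)
        _ ≤ _ := by
          have := aux_mul_le (k := k) A (p * m * L) (m * L)
          convert this using 3
          ring
    · rw [Ideal.span_le]
      rintro f ⟨d, hd, hf⟩
      rw [f.as_sum]
      apply Ideal.sum_mem
      intro s hs
      have hws : Finsupp.weight A s = d := hf (mem_support_iff.mp hs)
      have h2 : (m + m) * L ≤ Finsupp.weight A s := by
        rw [hws]
        calc (m + m) * L = 2 * m * L := by ring
          _ ≤ (p + 1) * m * L := by
            apply Nat.mul_le_mul_right
            exact Nat.mul_le_mul_right _ (by omega)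
          _ ≤ d := hd
      obtain ⟨t, htle, htw⟩ := aux_extract m A hApos L hdvd m s h2
      set u := s - t with hu
      have hsplit : t + u = s := (add_comm t u).trans (tsub_add_cancel_of_le htle)
      have hwu : Finsupp.weight A t + Finsupp.weight A u = d := by
        rw [← map_add, hsplit, hws]
      have hmono : (monomial s) (coeff s f) =
          (monomial t) (1 : k) * (monomial u) (coeff s f) := by
        rw [monomial_mul, hsplit, one_mul]
      rw [hmono, pow_succ, mul_comm]
      apply Ideal.mul_mem_mul
      · exact Ideal.subset_span ⟨m * L, le_refl _, isWeightedHomogeneous_monomial _ _ _ htw⟩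
      · rw [ih]
        apply Ideal.subset_span
        refine ⟨Finsupp.weight A u, ?_, isWeightedHomogeneous_monomial _ _ _ rfl⟩
        have : (p + 1) * m * L = p * m * L + m * L := by ring
        omega

theorem stmt0 (m : ℕ) (hm : 1 ≤ m) (k : Type*) [CommRing k] [IsDomain k]
    (A : Fin (m + 1) → ℕ) (hApos : ∀ i, 0 < A i)
    (L : ℕ) (hL : L = Finset.univ.lcm A)
    (J : Ideal (MvPolynomial (Fin (m + 1)) k))
    (hJhom : ∀ f ∈ J, ∀ d : ℕ, weightedHomogeneousComponent A d f ∈ J)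
    [IsDomain (MvPolynomial (Fin (m + 1)) k ⧸ J)]
    (I : Ideal (MvPolynomial (Fin (m + 1)) k ⧸ J))
    (hI : I = Ideal.map (Ideal.Quotient.mk J)
      (Ideal.span {f | ∃ d : ℕ, m * L ≤ d ∧ IsWeightedHomogeneous A f d}))
    (p : ℕ) (hp : 1 ≤ p) :
    I ^ p = Ideal.map (Ideal.Quotient.mk J)
      (Ideal.span {f | ∃ d : ℕ, p * m * L ≤ d ∧ IsWeightedHomogeneous A f d}) := by
  have hdvd : ∀ i, A i ∣ L := fun i => hL ▸ Finset.dvd_lcm (Finset.mem_univ i)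
  rw [hI, ← Ideal.map_pow, aux_main A hApos L hdvd p hp]
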